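/- Let N be a normal subgroup of a finite group G with quotient map x ↦ x̄, let S̄₁ ⊆ G/N with 1̄ ∉ S̄₁, let S₂ ⊆ N with 1 ∉ S₂, and let S₁ = {g ∈ G : ḡ ∈ S̄₁}. Assume Cay(G/N, S̄₁) is a DRR of G/N and Cay(N, S₂) is a DRR of N, and that it is not the case that both |G/N| = 2 and |N| = 2. Then Aut(Cay(G, S₁ ∪ S₂)) = W(G,N). -/

import Mathlib

/-! Common definitions: Cayley digraphs, digraph automorphism groups,
DRRs/GRRs, detecting groups, the regular representation, the group `W(G,N)`,
wreath and cartesian products of digraphs, and the wreath product of groups. -/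

universe u

/-- The adjacency relation of the Cayley digraph `Cay(G,S)`:
there is a directed edge from `g₁` to `g₂` iff `g₂ = s * g₁` for some `s ∈ S`. -/
def cayAdj {G : Type*} [Group G] (S : Set G) : G → G → Prop :=
  fun g₁ g₂ => ∃ s ∈ S, g₂ = s * g₁

/-- The automorphism group of a digraph (given by its adjacency relation),
as a subgroup of the symmetric group on the vertices. -/
def digraphAut {V : Type*} (Adj : V → V → Prop) : Subgroup (Equiv.Perm V) where
  carrier := {σ | ∀ x y, Adj (σ x) (σ y) ↔ Adj x y}
  one_mem' := fun _ _ => Iff.rfl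
  mul_mem' := by
    intro σ τ hσ hτ x y
    simp only [Equiv.Perm.mul_apply]
    exact (hσ _ _).trans (hτ _ _)
  inv_mem' := by
    intro σ hσ x y
    have h := (hσ (σ⁻¹ x) (σ⁻¹ y)).symm
    simpa using h

/-- A digraph is a DRR (digraphical regular representation) of the group `G` if its
automorphism group is isomorphic to `G` and acts regularly on the vertex set. -/
def IsDRR (G : Type*) [Group G] {V : Type*} (Adj : V → V → Prop) : Prop :=
  Nonempty (digraphAut Adj ≃* G) ∧
    ∀ v w : V, ∃! σ : digraphAut Adj, (σ : Equiv.Perm V) v = w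

/-- A GRR (graphical regular representation) of `G` is a DRR that is a graph. -/
def IsGRR (G : Type*) [Group G] {V : Type*} (Adj : V → V → Prop) : Prop :=
  Symmetric Adj ∧ IsDRR G Adj

/-- `Aut(G,S)` is trivial: the only group automorphism `φ` of `G` with `φ(S) = S`
is the identity. -/
def AutGSTrivial {G : Type*} [Group G] (S : Set G) : Prop :=
  ∀ φ : MulAut G, ⇑φ '' S = S → φ = 1

/-- `G` is DRR-detecting: for every `S ⊆ G`, if `Aut(G,S) = 1` then
`Cay(G,S)` is a DRR of `G`. -/
def DRRDetecting (G : Type*) [Group G] : Prop :=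
  ∀ S : Set G, AutGSTrivial S → IsDRR G (cayAdj S)

/-- `G` is GRR-detecting: for every inverse-closed `S ⊆ G`, if `Aut(G,S) = 1` then
`Cay(G,S)` is a GRR of `G`. -/
def GRRDetecting (G : Type*) [Group G] : Prop :=
  ∀ S : Set G, (∀ s ∈ S, s⁻¹ ∈ S) → AutGSTrivial S → IsGRR G (cayAdj S)

/-- `G` admits a DRR (equivalently, some Cayley digraph of `G` is a DRR). -/
def HasDRR (G : Type*) [Group G] : Prop :=
  ∃ S : Set G, IsDRR G (cayAdj S)

/-- `G` admits a GRR (equivalently, some Cayley graph of `G` is a GRR). -/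
def HasGRR (G : Type*) [Group G] : Prop :=
  ∃ S : Set G, (∀ s ∈ S, s⁻¹ ∈ S) ∧ IsGRR G (cayAdj S)

/-- The right regular representation `Ĝ = {x ↦ x·g : g ∈ G}` of `G`,
as a subgroup of the symmetric group on `G`. -/
def regularRep (G : Type*) [Group G] : Subgroup (Equiv.Perm G) where
  carrier := {σ | ∃ g : G, ∀ x, σ x = x * g}
  one_mem' := ⟨1, fun x => (mul_one x).symm⟩
  mul_mem' := by
    rintro σ τ ⟨g, hg⟩ ⟨h, hh⟩
    exact ⟨h * g, fun x => by
      simp only [Equiv.Perm.mul_apply, hg, hh, mul_assoc]⟩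
  inv_mem' := by
    rintro σ ⟨g, hg⟩
    refine ⟨g⁻¹, fun x => ?_⟩
    have h1 : σ (x * g⁻¹) = x := by rw [hg]; group
    calc σ⁻¹ x = σ⁻¹ (σ (x * g⁻¹)) := by rw [h1]
      _ = x * g⁻¹ := by simp

/-- The set `W(G,N)` of all permutations `φ_{c,f} : x ↦ x·c·f(x̄)` of `G`,
where `c ∈ G` and `f : G/N → N`. -/
def Wset (G : Type*) [Group G] (N : Subgroup G) [N.Normal] : Set (Equiv.Perm G) :=
  {σ | ∃ (c : G) (f : G ⧸ N → G), (∀ q, f q ∈ N) ∧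
      ∀ x : G, σ x = x * c * f (QuotientGroup.mk x)}

/-- The wreath product `X ≀ Y` of two digraphs. -/
def wreathAdj {X Y : Type*} (A : X → X → Prop) (B : Y → Y → Prop) :
    X × Y → X × Y → Prop :=
  fun p q => A p.1 q.1 ∨ (p.1 = q.1 ∧ B p.2 q.2)

/-- The cartesian product `X □ Y` of two digraphs. -/
def cartAdj {X Y : Type*} (A : X → X → Prop) (B : Y → Y → Prop) :
    X × Y → X × Y → Prop :=
  fun p q => (p.1 = q.1 ∧ B p.2 q.2) ∨ (p.2 = q.2 ∧ A p.1 q.1)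

/-- A digraph is prime with respect to the cartesian product if it has more than one
vertex and is not isomorphic to a cartesian product of two digraphs,
each with more than one vertex. -/
def IsPrimeDigraph {V : Type u} (Adj : V → V → Prop) : Prop :=
  (∃ x y : V, x ≠ y) ∧
    ¬ ∃ (X Y : Type u) (A : X → X → Prop) (B : Y → Y → Prop) (e : V ≃ X × Y),
        (∃ x₁ x₂ : X, x₁ ≠ x₂) ∧ (∃ y₁ y₂ : Y, y₁ ≠ y₂) ∧
          ∀ v w : V, Adj v w ↔ cartAdj A B (e v) (e w)

/-- A digraph is weakly connected if any two vertices are joined by a path in the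
underlying undirected graph. -/
def WeaklyConnected {V : Type*} (Adj : V → V → Prop) : Prop :=
  ∀ x y : V, Relation.ReflTransGen (fun a b => Adj a b ∨ Adj b a) x y

/-- Translation of coordinates: the automorphism `v ↦ (x ↦ v (x * q))`
of the group `Q → N`. -/
def transAut {Q N : Type*} [Group Q] [Group N] (q : Q) : (Q → N) ≃* (Q → N) where
  toFun v := fun x => v (x * q)
  invFun v := fun x => v (x * q⁻¹)
  left_inv v := funext fun x => by simp [mul_assoc]
  right_inv v := funext fun x => by simp [mul_assoc]
  map_mul' v w := rfl

/-- The action of `Q` on `Q → N` by translating coordinates, as a homomorphism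
`Q →* MulAut (Q → N)`. -/
def transHom (Q N : Type*) [Group Q] [Group N] : Q →* MulAut (Q → N) where
  toFun := transAut
  map_one' := by
    ext v x
    simp [transAut]
  map_mul' q₁ q₂ := by
    ext v x
    simp [transAut, mul_assoc, MulAut.mul_apply]

/-- The wreath product `Q ≀ N` of two groups: the semidirect product
`N^Q ⋊ Q`, with `Q` acting on `N^Q` by translating the coordinates. -/
abbrev WreathProd (Q N : Type*) [Group Q] [Group N] :=
  SemidirectProduct (Q → N) Q (transHom Q N)

set_option linter.unusedSectionVars false
set_option linter.unusedVariables false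

lemma mem_digraphAut {V : Type*} {A : V → V → Prop} {σ : Equiv.Perm V} :
    σ ∈ digraphAut A ↔ ∀ x y, A (σ x) (σ y) ↔ A x y := Iff.rfl

lemma cayAdj_iff {G : Type*} [Group G] (S : Set G) (x y : G) :
    cayAdj S x y ↔ y * x⁻¹ ∈ S := by
  constructor
  · rintro ⟨s, hs, rfl⟩; simpa using hs
  · intro h; exact ⟨y * x⁻¹, h, by group⟩

lemma mulRight_mem_aut {G : Type*} [Group G] (S : Set G) (c : G) :
    Equiv.mulRight c ∈ digraphAut (cayAdj S) := by
  intro x y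
  simp only [Equiv.coe_mulRight, cayAdj_iff, mul_inv_rev]
  have : y * c * (c⁻¹ * x⁻¹) = y * x⁻¹ := by group
  rw [this]

lemma drr_fix {H : Type*} [Group H] {S : Set H} (h : IsDRR H (cayAdj S))
    {σ : Equiv.Perm H} (hσ : σ ∈ digraphAut (cayAdj S)) {z : H} (hz : σ z = z) :
    σ = 1 := by
  obtain ⟨μ, hμ, huniq⟩ := h.2 z z
  have h1 : (⟨σ, hσ⟩ : digraphAut (cayAdj S)) = μ := huniq _ hz
  have h2 : (1 : digraphAut (cayAdj S)) = μ := huniq _ (by simp)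
  have := h1.trans h2.symm
  exact Subtype.ext_iff.mp this

lemma drr_translation {H : Type*} [Group H] {S : Set H} (h : IsDRR H (cayAdj S))
    {σ : Equiv.Perm H} (hσ : σ ∈ digraphAut (cayAdj S)) :
    ∀ x, σ x = x * σ 1 := by
  have hρ := mulRight_mem_aut S (σ 1)
  have hν : (Equiv.mulRight (σ 1))⁻¹ * σ ∈ digraphAut (cayAdj S) :=
    mul_mem (inv_mem hρ) hσ
  have hfix : ((Equiv.mulRight (σ 1))⁻¹ * σ) 1 = 1 := by
    simp [Equiv.Perm.mul_apply]
  have h1 := drr_fix h hν hfix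
  have h2 : Equiv.mulRight (σ 1) = σ := by
    rwa [inv_mul_eq_one] at h1
  intro x
  rw [← h2]
  simp

set_option linter.unusedSectionVars false
set_option linter.unusedVariables false
section Big

variable {G : Type*} [Group G] (N : Subgroup G) [N.Normal]
variable (T : Set (G ⧸ N)) (S₂ : Set ↥N)

def SS : Set G := {g : G | QuotientGroup.mk g ∈ T} ∪ (Subtype.val '' S₂)

lemma adj_iff (x y : G) :
    cayAdj (SS N T S₂) x y ↔
      ((QuotientGroup.mk (y * x⁻¹) : G ⧸ N) ∈ T ∨ y * x⁻¹ ∈ Subtype.val '' S₂) := by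
  rw [cayAdj_iff]; rfl

lemma mk_mul_inv (x y : G) :
    (QuotientGroup.mk (y * x⁻¹) : G ⧸ N) = QuotientGroup.mk y * (QuotientGroup.mk x)⁻¹ := by
  simp

lemma memS₂_mk_eq {x y : G} (h : y * x⁻¹ ∈ Subtype.val '' S₂) :
    (QuotientGroup.mk x : G ⧸ N) = QuotientGroup.mk y := by
  obtain ⟨n, -, hn⟩ := h
  have hmem : y * x⁻¹ ∈ N := hn ▸ n.2
  have : (QuotientGroup.mk (y * x⁻¹) : G ⧸ N) = 1 := (QuotientGroup.eq_one_iff _).mpr hmem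
  rw [mk_mul_inv, mul_inv_eq_one] at this
  exact this.symm

variable {T} in
lemma memT_mk_ne (hT : (1 : G ⧸ N) ∉ T) {x y : G}
    (h : (QuotientGroup.mk (y * x⁻¹) : G ⧸ N) ∈ T) :
    (QuotientGroup.mk x : G ⧸ N) ≠ QuotientGroup.mk y := by
  intro he
  rw [mk_mul_inv, ← he, mul_inv_cancel] at h
  exact hT h

variable {T} in
lemma adj_cross (hT : (1 : G ⧸ N) ∉ T) {x y : G}
    (hne : (QuotientGroup.mk x : G ⧸ N) ≠ QuotientGroup.mk y) :
    cayAdj (SS N T S₂) x y ↔ (QuotientGroup.mk y * (QuotientGroup.mk x)⁻¹ : G ⧸ N) ∈ T := by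
  rw [adj_iff, ← mk_mul_inv]
  constructor
  · rintro (h | h)
    · exact h
    · exact absurd (memS₂_mk_eq N S₂ h) hne
  · exact Or.inl

variable {T} in
lemma adj_same (hT : (1 : G ⧸ N) ∉ T) {x y : G}
    (he : (QuotientGroup.mk x : G ⧸ N) = QuotientGroup.mk y) :
    cayAdj (SS N T S₂) x y ↔ y * x⁻¹ ∈ Subtype.val '' S₂ := by
  rw [adj_iff]
  constructor
  · rintro (h | h)
    · exact absurd he (memT_mk_ne N hT h)
    · exact h
  · exact Or.inr

lemma coset_ncard [Finite G] (w : G) :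
    Set.ncard {z : G | (QuotientGroup.mk z : G ⧸ N) = QuotientGroup.mk w} = Nat.card ↥N := by
  have himg : {z : G | (QuotientGroup.mk z : G ⧸ N) = QuotientGroup.mk w}
      = (fun g => g * w) '' (N : Set G) := by
    ext z
    simp only [Set.mem_setOf_eq, Set.mem_image, SetLike.mem_coe]
    constructor
    · intro h
      refine ⟨z * w⁻¹, ?_, by group⟩
      have : (QuotientGroup.mk (z * w⁻¹) : G ⧸ N) = 1 := by
        rw [mk_mul_inv, h, mul_inv_cancel]
      exact (QuotientGroup.eq_one_iff _).mp this
    · rintro ⟨n, hn, rfl⟩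
      have h1 : (QuotientGroup.mk n : G ⧸ N) = 1 := (QuotientGroup.eq_one_iff n).mpr hn
      rw [QuotientGroup.mk_mul, h1, one_mul]
  rw [himg, Set.ncard_image_of_injective _ (mul_left_injective w)]
  rw [← Nat.card_coe_set_eq]
  simp

end Big

section Gen

lemma image_out {V : Type*} {A : V → V → Prop} {σ : Equiv.Perm V}
    (hσ : σ ∈ digraphAut A) (x : V) :
    σ '' {z | A x z} = {z | A (σ x) z} := by
  ext z
  constructor
  · rintro ⟨w, hw, rfl⟩
    exact (hσ x w).mpr hw
  · intro hz
    refine ⟨σ⁻¹ z, ?_, by simp⟩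
    have := hσ x (σ⁻¹ z)
    simp only [Equiv.Perm.inv_def, Equiv.apply_symm_apply] at this
    exact this.mp hz

lemma image_in {V : Type*} {A : V → V → Prop} {σ : Equiv.Perm V}
    (hσ : σ ∈ digraphAut A) (x : V) :
    σ '' {z | A z x} = {z | A z (σ x)} := by
  ext z
  constructor
  · rintro ⟨w, hw, rfl⟩
    exact (hσ w x).mpr hw
  · intro hz
    refine ⟨σ⁻¹ z, ?_, by simp⟩
    have := hσ (σ⁻¹ z) x
    simp only [Equiv.Perm.inv_def, Equiv.apply_symm_apply] at this
    exact this.mp hz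

lemma not_iff_and_logic {P Q R S : Prop} (h : ¬((P ↔ Q) ∧ (R ↔ S))) :
    (P ∧ ¬Q) ∨ (¬P ∧ Q) ∨ (R ∧ ¬S) ∨ (¬R ∧ S) := by
  by_cases hP : P <;> by_cases hQ : Q <;> by_cases hR : R <;> by_cases hS : S <;> tauto

lemma third_elem {K : Type*} [Finite K] (h3 : 2 < Nat.card K) (a b : K) :
    ∃ c : K, c ≠ a ∧ c ≠ b := by
  by_contra h
  push_neg at h
  have hsub : (Set.univ : Set K) ⊆ {a, b} := by
    intro t _
    rcases eq_or_ne t a with rfl | ht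
    · exact Set.mem_insert _ _
    · exact Set.mem_insert_of_mem _ (h t ht)
  have h1 := Set.ncard_le_ncard hsub (Set.toFinite _)
  rw [Set.ncard_univ] at h1
  have h2 : ({a, b} : Set K).ncard ≤ 2 :=
    (Set.ncard_insert_le _ _).trans (by simp)
  omega

lemma two_unique {K : Type*} (hk : Nat.card K = 2) {u v : K} [Group K]
    (hu : u ≠ 1) (hv : v ≠ 1) : u = v := by
  obtain ⟨y, -, hy⟩ := (Nat.card_eq_two_iff' (1 : K)).mp hk
  rw [hy u hu, hy v hv]

lemma closure_contra {H : Type*} [Group H] [Finite H] {S : Set H} (hS1 : (1 : H) ∉ S)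
    (hdrr : IsDRR H (cayAdj S)) (M : Subgroup H) (b₀ : Prop)
    (hb : ∀ m : H, m ∉ M → (m ∈ S ↔ b₀)) (hM : M ≠ ⊤)
    {m₀ : H} (hm₀ : m₀ ∈ M) (hm₀1 : m₀ ≠ 1) : False := by
  classical
  obtain ⟨z, hz⟩ : ∃ z, z ∉ M := by
    by_contra h; push_neg at h; exact hM ((Subgroup.eq_top_iff' M).mpr h)
  set φ : Equiv.Perm H :=
    { toFun := fun m => if m ∈ M then m * m₀ else m
      invFun := fun m => if m ∈ M then m * m₀⁻¹ else m
      left_inv := by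
        intro m
        by_cases h : m ∈ M
        · simp [h, mul_mem h hm₀, mul_assoc]
        · simp [h]
      right_inv := by
        intro m
        by_cases h : m ∈ M
        · simp [h, mul_mem h (inv_mem hm₀), mul_assoc]
        · simp [h] } with hφdef
  have hφ : φ ∈ digraphAut (cayAdj S) := by
    intro p r
    simp only [hφdef, cayAdj_iff, Equiv.coe_fn_mk]
    by_cases hp : p ∈ M <;> by_cases hr : r ∈ M <;> simp only [hp, hr, if_true, if_false]
    · have : r * m₀ * (p * m₀)⁻¹ = r * p⁻¹ := by group
      rw [this]
    · -- p ∈ M, r ∉ M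
      have h1 : r * (p * m₀)⁻¹ ∉ M := by
        intro h
        have heq : r = (r * (p * m₀)⁻¹) * (p * m₀) := by group
        rw [heq] at hr
        exact hr (mul_mem h (mul_mem hp hm₀))
      have h2 : r * p⁻¹ ∉ M := by
        intro h
        have heq : r = (r * p⁻¹) * p := by group
        rw [heq] at hr
        exact hr (mul_mem h hp)
      rw [hb _ h1, hb _ h2]
    · -- p ∉ M, r ∈ M
      have h1 : r * m₀ * p⁻¹ ∉ M := by
        intro h
        have : p = (r * m₀ * p⁻¹)⁻¹ * (r * m₀) := by group
        rw [this] at hp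
        exact hp (mul_mem (inv_mem h) (mul_mem hr hm₀))
      have h2 : r * p⁻¹ ∉ M := by
        intro h
        have : p = (r * p⁻¹)⁻¹ * r := by group
        rw [this] at hp
        exact hp (mul_mem (inv_mem h) hr)
      rw [hb _ h1, hb _ h2]
  have hfix : φ z = z := by simp [hφdef, hz]
  have hone := drr_fix hdrr hφ hfix
  have h1 : φ 1 = 1 := by rw [hone]; rfl
  simp only [hφdef, Equiv.coe_fn_mk, one_mem, if_true, one_mul] at h1
  exact hm₀1 h1

lemma swap_contra {H : Type*} [Group H] [Finite H] {S : Set H} (hS1 : (1 : H) ∉ S)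
    (hdrr : IsDRR H (cayAdj S)) (b₀ : Prop) (hall : ∀ m : H, m ≠ 1 → (m ∈ S ↔ b₀))
    (h3 : 2 < Nat.card H) : False := by
  classical
  have hnt : Nontrivial H := Finite.one_lt_card_iff_nontrivial.mp (by omega)
  obtain ⟨u, v, huv⟩ := exists_pair_ne H
  obtain ⟨w, hwu, hwv⟩ := third_elem h3 u v
  have key : ∀ p r : H, cayAdj S p r ↔ (p ≠ r ∧ b₀) := by
    intro p r
    rw [cayAdj_iff]
    by_cases h : p = r
    · subst h
      simp [hS1]
    · have hne : r * p⁻¹ ≠ 1 := by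
        intro hh
        rw [mul_inv_eq_one] at hh
        exact h hh.symm
      rw [hall _ hne]
      simp [h]
  have hsw : Equiv.swap u v ∈ digraphAut (cayAdj S) := by
    intro p r
    rw [key, key]
    constructor
    · rintro ⟨h1, h2⟩
      exact ⟨fun h => h1 (by rw [h]), h2⟩
    · rintro ⟨h1, h2⟩
      exact ⟨fun h => h1 ((Equiv.swap u v).injective h), h2⟩
  have hone := drr_fix hdrr hsw (Equiv.swap_apply_of_ne_of_ne hwu hwv)
  have : Equiv.swap u v u = u := by rw [hone]; rfl
  rw [Equiv.swap_apply_left] at this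
  exact huv this.symm

end Gen

section Gen2

lemma twin_contra {K : Type*} [Group K] [Finite K] {T : Set K} (hT1 : (1 : K) ∉ T)
    (hdrr : IsDRR K (cayAdj T)) {a b c : K} (hab : a ≠ b) (hca : c ≠ a) (hcb : c ≠ b)
    (h1 : ∀ d : K, d ≠ a → d ≠ b →
      ((d * a⁻¹ ∈ T ↔ d * b⁻¹ ∈ T) ∧ (a * d⁻¹ ∈ T ↔ b * d⁻¹ ∈ T))) : False := by
  classical
  set A : Set K := {d | d * a⁻¹ ∈ T} with hA
  set B : Set K := {d | d * b⁻¹ ∈ T} with hB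
  have haA : a ∉ A := by simp [hA, hT1]
  have hbB : b ∉ B := by simp [hB, hT1]
  have hAcard : A.ncard = T.ncard := by
    have : A = (fun t => t * a) '' T := by
      ext d
      simp only [hA, Set.mem_setOf_eq, Set.mem_image]
      constructor
      · intro h; exact ⟨d * a⁻¹, h, by group⟩
      · rintro ⟨t, ht, rfl⟩; simpa using ht
    rw [this, Set.ncard_image_of_injective _ (mul_left_injective a)]
  have hBcard : B.ncard = T.ncard := by
    have : B = (fun t => t * b) '' T := by
      ext d
      simp only [hB, Set.mem_setOf_eq, Set.mem_image]
      constructor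
      · intro h; exact ⟨d * b⁻¹, h, by group⟩
      · rintro ⟨t, ht, rfl⟩; simpa using ht
    rw [this, Set.ncard_image_of_injective _ (mul_left_injective b)]
  have hdiffAB : A \ B ⊆ {b} := by
    intro d ⟨hdA, hdB⟩
    by_cases hda : d = a
    · exact absurd (hda ▸ hdA) haA
    · by_cases hdb : d = b
      · exact hdb
      · exact absurd ((h1 d hda hdb).1.mp hdA) hdB
  have hdiffBA : B \ A ⊆ {a} := by
    intro d ⟨hdB, hdA⟩
    by_cases hdb : d = b
    · exact absurd (hdb ▸ hdB) hbB
    · by_cases hda : d = a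
      · exact hda
      · exact absurd ((h1 d hda hdb).1.mpr hdB) hdA
  have hdcard : (A \ B).ncard = (B \ A).ncard :=
    (Set.ncard_eq_ncard_iff_ncard_diff_eq_ncard_diff (Set.toFinite _) (Set.toFinite _)).mp
      (hAcard.trans hBcard.symm)
  have hsym : b * a⁻¹ ∈ T ↔ a * b⁻¹ ∈ T := by
    constructor
    · intro h
      have hbA : b ∈ A \ B := ⟨h, hbB⟩
      have : (B \ A).Nonempty := by
        rw [← Set.ncard_pos (Set.toFinite _)] at *
        rw [← hdcard]
        exact Set.ncard_pos (Set.toFinite _) |>.mpr ⟨b, hbA⟩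
      obtain ⟨d, hd⟩ := this
      have : d = a := hdiffBA hd
      exact this ▸ hd.1
    · intro h
      have haB : a ∈ B \ A := ⟨h, haA⟩
      have : (A \ B).Nonempty := by
        rw [← Set.ncard_pos (Set.toFinite _)]
        rw [hdcard]
        exact Set.ncard_pos (Set.toFinite _) |>.mpr ⟨a, haB⟩
      obtain ⟨d, hd⟩ := this
      have : d = b := hdiffAB hd
      exact this ▸ hd.1
  have hsw : Equiv.swap a b ∈ digraphAut (cayAdj T) := by
    intro p r
    rw [cayAdj_iff, cayAdj_iff]
    by_cases hp : p = a
    · subst hp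
      by_cases hr1 : r = p
      · subst hr1; simp
      · by_cases hr2 : r = b
        · subst hr2
          rw [Equiv.swap_apply_left, Equiv.swap_apply_right]
          exact hsym.symm
        · rw [Equiv.swap_apply_left, Equiv.swap_apply_of_ne_of_ne hr1 hr2]
          exact ((h1 r hr1 hr2).1).symm
    · by_cases hp2 : p = b
      · subst hp2
        by_cases hr1 : r = a
        · subst hr1
          rw [Equiv.swap_apply_right, Equiv.swap_apply_left]
          exact hsym
        · by_cases hr2 : r = p
          · subst hr2; simp
          · rw [Equiv.swap_apply_right, Equiv.swap_apply_of_ne_of_ne hr1 hr2]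
            exact (h1 r hr1 hr2).1
      · rw [Equiv.swap_apply_of_ne_of_ne hp hp2]
        by_cases hr1 : r = a
        · subst hr1
          rw [Equiv.swap_apply_left]
          exact ((h1 p hp hp2).2).symm
        · by_cases hr2 : r = b
          · subst hr2
            rw [Equiv.swap_apply_right]
            exact (h1 p hp hp2).2
          · rw [Equiv.swap_apply_of_ne_of_ne hr1 hr2]
  have hone := drr_fix hdrr hsw (Equiv.swap_apply_of_ne_of_ne hca hcb)
  have : Equiv.swap a b a = a := by rw [hone]; rfl
  rw [Equiv.swap_apply_left] at this
  exact hab this.symm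

lemma reach_of_closure {G : Type*} [Group G] (N : Subgroup G) (R : G → G → Prop)
    (hsym : ∀ z w, R z w → R w z) (C : Set ↥N)
    (hstep : ∀ (z : G) (c : ↥N), c ∈ C → R z (↑c * z))
    (htop : Subgroup.closure C = ⊤) :
    ∀ (n : ↥N) (z : G), Relation.ReflTransGen R z (↑n * z) := by
  have hRsym : Symmetric (Relation.ReflTransGen R) :=
    by haveI : Std.Symm R := ⟨fun _ _ h => hsym _ _ h⟩; exact fun a b h => (Std.Symm.iff (r := Relation.ReflTransGen R) a b).mp h
  have main : ∀ (n : ↥N), n ∈ Subgroup.closure C →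
      ∀ z, Relation.ReflTransGen R z (↑n * z) := by
    intro n hn
    induction hn using Subgroup.closure_induction with
    | mem m hm =>
      intro z
      exact Relation.ReflTransGen.single (hstep z m hm)
    | one =>
      intro z
      simp only [OneMemClass.coe_one, one_mul]
      exact Relation.ReflTransGen.refl
    | mul m m' hm hm' ihm ihm' =>
      intro z
      have h1 := ihm' z
      have h2 := ihm ((↑m' : G) * z)
      have : (↑(m * m') : G) * z = ↑m * (↑m' * z) := by
        push_cast
        group
      rw [this]
      exact h1.trans h2
    | inv m hm ihm =>
      intro z
      have h1 := ihm ((↑m⁻¹ : G) * z)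
      have : (↑m : G) * ((↑m⁻¹ : G) * z) = z := by
        push_cast
        group
      rw [this] at h1
      exact hRsym h1
  intro n z
  exact main n (htop ▸ Subgroup.mem_top n) z

lemma pi_of_reach {G : Type*} [Group G] (N : Subgroup G) {R : G → G → Prop}
    (hR2 : ∀ z w, R z w → (QuotientGroup.mk z : G ⧸ N) = QuotientGroup.mk w)
    {x y : G} (h : Relation.ReflTransGen R x y) :
    (QuotientGroup.mk x : G ⧸ N) = QuotientGroup.mk y := by
  induction h with
  | refl => rfl
  | tail h1 h2 ih => exact ih.trans (hR2 _ _ h2)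

end Gen2

section StepA

variable {G : Type*} [Group G] [Fintype G] {N : Subgroup G} [N.Normal]
variable {T : Set (G ⧸ N)} {S₂ : Set ↥N}

lemma stepA (hT : (1 : G ⧸ N) ∉ T) (hS₂ : (1 : ↥N) ∉ S₂)
    (hDRR₁ : IsDRR (G ⧸ N) (cayAdj T)) (hDRR₂ : IsDRR ↥N (cayAdj S₂))
    (hcard : ¬(Nat.card (G ⧸ N) = 2 ∧ Nat.card ↥N = 2))
    {σ : Equiv.Perm G} (hσ : σ ∈ digraphAut (cayAdj (SS N T S₂)))
    {x y : G} (hxy : (QuotientGroup.mk x : G ⧸ N) = QuotientGroup.mk y) :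
    (QuotientGroup.mk (σ x) : G ⧸ N) = QuotientGroup.mk (σ y) := by
  classical
  rcases eq_or_ne x y with rfl | hne
  · rfl
  -- the nontrivial element of N
  have hyxN : y * x⁻¹ ∈ N := by
    have : (QuotientGroup.mk (y * x⁻¹) : G ⧸ N) = 1 := by
      rw [mk_mul_inv, ← hxy, mul_inv_cancel]
    exact (QuotientGroup.eq_one_iff _).mp this
  set m₁ : ↥N := ⟨y * x⁻¹, hyxN⟩ with hm₁
  have hm₁ne : m₁ ≠ 1 := by
    intro h
    apply hne
    have : y * x⁻¹ = 1 := congrArg Subtype.val h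
    rw [mul_inv_eq_one] at this
    exact this.symm
  have hNnt : Nontrivial ↥N := ⟨m₁, 1, hm₁ne⟩
  have hn2 : 2 ≤ Nat.card ↥N := Finite.one_lt_card_iff_nontrivial.mpr hNnt
  have hS₂val : ∀ (m : ↥N), (↑m : G) ∈ Subtype.val '' S₂ ↔ m ∈ S₂ := by
    intro m
    constructor
    · rintro ⟨m', hm', he⟩
      rwa [Subtype.val_injective he] at hm'
    · intro h; exact ⟨m, h, rfl⟩
  by_cases hk2 : Nat.card (G ⧸ N) = 2
  · -- two cosets
    have hn3 : 2 < Nat.card ↥N := by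
      rcases lt_or_eq_of_le hn2 with h | h
      · exact h
      · exact absurd ⟨hk2, h.symm⟩ hcard
    by_cases hTe : ∃ t, t ∈ T
    · -- T = {t}: cross-coset pairs doubly adjacent
      obtain ⟨t, ht⟩ := hTe
      have ht1 : t ≠ 1 := fun h => hT (h ▸ ht)
      have hcross : ∀ z w : G,
          (QuotientGroup.mk z : G ⧸ N) ≠ QuotientGroup.mk w → cayAdj (SS N T S₂) z w := by
        intro z w hzw
        rw [adj_cross N S₂ hT hzw]
        have hne1 : (QuotientGroup.mk w * (QuotientGroup.mk z)⁻¹ : G ⧸ N) ≠ 1 := by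
          intro h
          rw [mul_inv_eq_one] at h
          exact hzw h.symm
        rwa [two_unique hk2 hne1 ht1]
      set R : G → G → Prop :=
        fun z w => z ≠ w ∧ ¬(cayAdj (SS N T S₂) z w ∧ cayAdj (SS N T S₂) w z) with hR
      have hR2 : ∀ z w, R z w →
          (QuotientGroup.mk z : G ⧸ N) = QuotientGroup.mk w := by
        intro z w ⟨h1, h2⟩
        by_contra hnezw
        exact h2 ⟨hcross z w hnezw, hcross w z (fun h => hnezw h.symm)⟩
      set C : Set ↥N := {m | m ≠ 1 ∧ ¬(m ∈ S₂ ∧ m⁻¹ ∈ S₂)} with hC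
      have htop : Subgroup.closure C = ⊤ := by
        by_contra hM
        have hb : ∀ m : ↥N, m ∉ Subgroup.closure C → (m ∈ S₂ ↔ True) := by
          intro m hm
          simp only [iff_true]
          have hm1 : m ≠ 1 := fun h => hm (h ▸ one_mem _)
          by_contra hmS
          exact hm (Subgroup.subset_closure ⟨hm1, fun hpair => hmS hpair.1⟩)
        by_cases hex : ∃ m₀ ∈ Subgroup.closure C, m₀ ≠ 1
        · obtain ⟨m₀, hm₀, hm₀1⟩ := hex
          exact closure_contra hS₂ hDRR₂ _ True hb hM hm₀ hm₀1
        · push_neg at hex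
          have hall : ∀ m : ↥N, m ≠ 1 → (m ∈ S₂ ↔ True) := by
            intro m hm1
            exact hb m (fun h => hm1 (hex m h))
          exact swap_contra hS₂ hDRR₂ True hall hn3
      have hstep : ∀ (z : G) (c : ↥N), c ∈ C → R z (↑c * z) := by
        intro z c hc
        obtain ⟨hc1, hc2⟩ := hc
        constructor
        · intro h
          apply hc1
          have : (↑c : G) = 1 := by
            have := h.symm
            rwa [mul_eq_right] at this
          exact Subtype.val_injective this
        · intro ⟨ha1, ha2⟩
          apply hc2
          have he : (QuotientGroup.mk z : G ⧸ N) = QuotientGroup.mk ((↑c : G) * z) := by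
            rw [QuotientGroup.mk_mul, (QuotientGroup.eq_one_iff (↑c : G)).mpr c.2, one_mul]
          rw [adj_same N S₂ hT he] at ha1
          rw [adj_same N S₂ hT he.symm] at ha2
          have e1 : (↑c : G) * z * z⁻¹ = ↑c := by group
          have e2 : z * ((↑c : G) * z)⁻¹ = ↑(c⁻¹) := by push_cast; group
          rw [e1, hS₂val] at ha1
          rw [e2, hS₂val] at ha2
          exact ⟨ha1, ha2⟩
      have hreach : Relation.ReflTransGen R x y := by
        have := reach_of_closure N R (fun z w h => ⟨fun he => h.1 he.symm, fun ha => h.2 ⟨ha.2, ha.1⟩⟩) C hstep htop m₁ x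
        have e : (↑m₁ : G) * x = y := by simp only [hm₁]; group
        rwa [e] at this
      have hreach' : Relation.ReflTransGen R (σ x) (σ y) := by
        refine Relation.ReflTransGen.lift σ ?_ _ _ hreach
        intro p q ⟨h1, h2⟩
        exact ⟨fun h => h1 (σ.injective h),
          fun ha => h2 ⟨(hσ p q).mp ha.1, (hσ q p).mp ha.2⟩⟩
      exact pi_of_reach N hR2 hreach'
    · -- T = ∅ : all edges within cosets
      push_neg at hTe
      set R : G → G → Prop := fun z w => cayAdj (SS N T S₂) z w ∨ cayAdj (SS N T S₂) w z with hR
      have hR2 : ∀ z w, R z w →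
          (QuotientGroup.mk z : G ⧸ N) = QuotientGroup.mk w := by
        intro z w h
        rcases h with h | h
        · rcases (adj_iff N T S₂ z w).mp h with h1 | h1
          · exact absurd h1 (hTe _)
          · exact memS₂_mk_eq N S₂ h1
        · rcases (adj_iff N T S₂ w z).mp h with h1 | h1
          · exact absurd h1 (hTe _)
          · exact (memS₂_mk_eq N S₂ h1).symm
      set C : Set ↥N := S₂ with hC
      have htop : Subgroup.closure C = ⊤ := by
        by_contra hM
        have hb : ∀ m : ↥N, m ∉ Subgroup.closure C → (m ∈ S₂ ↔ False) := by
          intro m hm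
          simp only [iff_false]
          exact fun h => hm (Subgroup.subset_closure h)
        by_cases hex : ∃ m₀ ∈ Subgroup.closure C, m₀ ≠ 1
        · obtain ⟨m₀, hm₀, hm₀1⟩ := hex
          exact closure_contra hS₂ hDRR₂ _ False hb hM hm₀ hm₀1
        · push_neg at hex
          have hall : ∀ m : ↥N, m ≠ 1 → (m ∈ S₂ ↔ False) := by
            intro m hm1
            exact hb m (fun h => hm1 (hex m h))
          exact swap_contra hS₂ hDRR₂ False hall hn3
      have hstep : ∀ (z : G) (c : ↥N), c ∈ C → R z (↑c * z) := by
        intro z c hc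
        left
        rw [adj_iff]
        right
        have e1 : (↑c : G) * z * z⁻¹ = ↑c := by group
        rw [e1, hS₂val]
        exact hc
      have hreach : Relation.ReflTransGen R x y := by
        have := reach_of_closure N R (fun z w h => h.symm) C hstep htop m₁ x
        have e : (↑m₁ : G) * x = y := by simp only [hm₁]; group
        rwa [e] at this
      have hreach' : Relation.ReflTransGen R (σ x) (σ y) := by
        refine Relation.ReflTransGen.lift σ ?_ _ _ hreach
        intro p q h
        rcases h with h | h
        · exact Or.inl ((hσ p q).mpr h)
        · exact Or.inr ((hσ q p).mpr h)
      exact pi_of_reach N hR2 hreach'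
  · -- more than two cosets (or the contradiction branch)
    by_contra hab
    set a : G ⧸ N := QuotientGroup.mk (σ x) with ha
    set b : G ⧸ N := QuotientGroup.mk (σ y) with hb
    have habne : a ≠ b := hab
    have hKnt : Nontrivial (G ⧸ N) := ⟨a, b, habne⟩
    have hk3 : 2 < Nat.card (G ⧸ N) := by
      have := Finite.one_lt_card_iff_nontrivial.mpr hKnt
      omega
    by_cases hcase : ∃ d : G ⧸ N, d ≠ a ∧ d ≠ b ∧
        ¬((d * a⁻¹ ∈ T ↔ d * b⁻¹ ∈ T) ∧ (a * d⁻¹ ∈ T ↔ b * d⁻¹ ∈ T))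
    · -- counting case
      obtain ⟨d, hda, hdb, hdT⟩ := hcase
      set Adj := cayAdj (SS N T S₂) with hAdj
      set Ox : Set G := {z | Adj x z} with hOx
      set Oy : Set G := {z | Adj y z} with hOy
      set Ix : Set G := {z | Adj z x} with hIx
      set Iy : Set G := {z | Adj z y} with hIy
      set D : Set G := ((Ox \ Oy) ∪ (Oy \ Ox)) ∪ ((Ix \ Iy) ∪ (Iy \ Ix)) with hD
      set D' : Set G := (({z | Adj (σ x) z} \ {z | Adj (σ y) z}) ∪ ({z | Adj (σ y) z} \ {z | Adj (σ x) z})) ∪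
        (({z | Adj z (σ x)} \ {z | Adj z (σ y)}) ∪ ({z | Adj z (σ y)} \ {z | Adj z (σ x)})) with hD'
      have himg : σ '' D = D' := by
        rw [hD, hD']
        rw [Set.image_union, Set.image_union, Set.image_union,
          Set.image_diff σ.injective, Set.image_diff σ.injective,
          Set.image_diff σ.injective, Set.image_diff σ.injective,
          image_out hσ, image_out hσ, image_in hσ, image_in hσ]
      have hDsub : D ⊆ {z : G | (QuotientGroup.mk z : G ⧸ N) = QuotientGroup.mk x} := by
        intro z hz
        by_contra hzx
        have hzy : (QuotientGroup.mk z : G ⧸ N) ≠ QuotientGroup.mk y := hxy ▸ hzx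
        have e1 : Adj x z ↔ Adj y z := by
          rw [hAdj, adj_cross N S₂ hT (fun h => hzx h.symm),
            adj_cross N S₂ hT (fun h => hzy h.symm), hxy]
        have e2 : Adj z x ↔ Adj z y := by
          rw [hAdj, adj_cross N S₂ hT hzx, adj_cross N S₂ hT hzy, hxy]
        simp only [hD, Set.mem_union, Set.mem_diff, hOx, hOy, hIx, hIy, Set.mem_setOf_eq] at hz
        tauto
      have hfib : {z : G | QuotientGroup.mk z = d} ⊆ D' := by
        intro z hz
        have hzd : (QuotientGroup.mk z : G ⧸ N) = d := hz
        have hza : (QuotientGroup.mk z : G ⧸ N) ≠ a := by rw [hzd]; exact hda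
        have hzb : (QuotientGroup.mk z : G ⧸ N) ≠ b := by rw [hzd]; exact hdb
        have e1 : Adj (σ x) z ↔ d * a⁻¹ ∈ T := by
          rw [hAdj, adj_cross N S₂ hT (fun h => hza h.symm), ← ha, hzd]
        have e2 : Adj (σ y) z ↔ d * b⁻¹ ∈ T := by
          rw [hAdj, adj_cross N S₂ hT (fun h => hzb h.symm), ← hb, hzd]
        have e3 : Adj z (σ x) ↔ a * d⁻¹ ∈ T := by
          rw [hAdj, adj_cross N S₂ hT hza, ← ha, hzd]
        have e4 : Adj z (σ y) ↔ b * d⁻¹ ∈ T := by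
          rw [hAdj, adj_cross N S₂ hT hzb, ← hb, hzd]
        simp only [hD', Set.mem_union, Set.mem_diff, Set.mem_setOf_eq]
        rcases not_iff_and_logic hdT with h | h | h | h
        · exact Or.inl (Or.inl ⟨e1.mpr h.1, fun hm => h.2 (e2.mp hm)⟩)
        · exact Or.inl (Or.inr ⟨e2.mpr h.2, fun hm => h.1 (e1.mp hm)⟩)
        · exact Or.inr (Or.inl ⟨e3.mpr h.1, fun hm => h.2 (e4.mp hm)⟩)
        · exact Or.inr (Or.inr ⟨e4.mpr h.2, fun hm => h.1 (e3.mp hm)⟩)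
      -- cardinalities
      obtain ⟨wd, hwd⟩ := QuotientGroup.mk_surjective d
      have hfibcard : ({z : G | QuotientGroup.mk z = d} : Set G).ncard = Nat.card ↥N := by
        rw [← hwd]
        exact coset_ncard N wd
      have hcosetcard := coset_ncard N x
      have c1 : D.ncard ≤ Nat.card ↥N := by
        rw [← hcosetcard]
        exact Set.ncard_le_ncard hDsub (Set.toFinite _)
      have c3 : D'.ncard = D.ncard := by
        rw [← himg, Set.ncard_image_of_injective _ σ.injective]
      have c2 : Nat.card ↥N ≤ D'.ncard := by
        rw [← hfibcard]
        exact Set.ncard_le_ncard hfib (Set.toFinite _)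
      have hDfull : {z : G | QuotientGroup.mk z = d} = D' :=
        Set.eq_of_subset_of_ncard_le hfib (by omega) (Set.toFinite _)
      have hxD : x ∈ D := by
        have hDeq : D = {z : G | (QuotientGroup.mk z : G ⧸ N) = QuotientGroup.mk x} :=
          Set.eq_of_subset_of_ncard_le hDsub (by omega) (Set.toFinite _)
        rw [hDeq]
        exact rfl
      have : σ x ∈ D' := by
        rw [← himg]
        exact ⟨x, hxD, rfl⟩
      rw [← hDfull] at this
      have h5 : (QuotientGroup.mk (σ x) : G ⧸ N) = d := this
      exact hda (h5.symm.trans ha.symm)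
    · push_neg at hcase
      obtain ⟨c, hca, hcb⟩ := third_elem hk3 a b
      have h1 : ∀ d : G ⧸ N, d ≠ a → d ≠ b →
          ((d * a⁻¹ ∈ T ↔ d * b⁻¹ ∈ T) ∧ (a * d⁻¹ ∈ T ↔ b * d⁻¹ ∈ T)) := by
        intro d h1 h2
        exact hcase d h1 h2
      exact twin_contra hT hDRR₁ habne hca hcb h1

end StepA

section StepBC

variable {G : Type*} [Group G] [Fintype G] {N : Subgroup G} [N.Normal]
variable {T : Set (G ⧸ N)} {S₂ : Set ↥N}

lemma memS₂_iff_val (S₂ : Set ↥N) (m : ↥N) :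
    (↑m : G) ∈ Subtype.val '' S₂ ↔ m ∈ S₂ := by
  constructor
  · rintro ⟨m', hm', he⟩
    rwa [Subtype.val_injective he] at hm'
  · intro h; exact ⟨m, h, rfl⟩

lemma stepB (hT : (1 : G ⧸ N) ∉ T) (hS₂ : (1 : ↥N) ∉ S₂)
    (hDRR₁ : IsDRR (G ⧸ N) (cayAdj T)) (hDRR₂ : IsDRR ↥N (cayAdj S₂))
    (hcard : ¬(Nat.card (G ⧸ N) = 2 ∧ Nat.card ↥N = 2))
    {σ : Equiv.Perm G} (hσ : σ ∈ digraphAut (cayAdj (SS N T S₂))) :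
    ∀ z : G, (QuotientGroup.mk (σ z) : G ⧸ N) =
      QuotientGroup.mk z * QuotientGroup.mk (σ 1) := by
  classical
  have hA : ∀ {u v : G}, (QuotientGroup.mk u : G ⧸ N) = QuotientGroup.mk v →
      (QuotientGroup.mk (σ u) : G ⧸ N) = QuotientGroup.mk (σ v) :=
    fun h => stepA hT hS₂ hDRR₁ hDRR₂ hcard hσ h
  have hA' : ∀ {u v : G}, (QuotientGroup.mk (σ u) : G ⧸ N) = QuotientGroup.mk (σ v) →
      (QuotientGroup.mk u : G ⧸ N) = QuotientGroup.mk v := by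
    intro u v h
    have := stepA hT hS₂ hDRR₁ hDRR₂ hcard (inv_mem hσ) h
    simpa using this
  set f : G ⧸ N → G ⧸ N := fun q => QuotientGroup.mk (σ q.out) with hf
  have hfmk : ∀ z : G, f (QuotientGroup.mk z) = QuotientGroup.mk (σ z) := by
    intro z
    exact hA (QuotientGroup.out_eq' (QuotientGroup.mk z))
  have hinj : Function.Injective f := by
    intro q r h
    rw [hf] at h
    have := hA' h
    rwa [QuotientGroup.out_eq', QuotientGroup.out_eq'] at this
  have hbij : Function.Bijective f := Finite.injective_iff_bijective.mp hinj
  set σbar : Equiv.Perm (G ⧸ N) := Equiv.ofBijective f hbij with hσbar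
  have hσbar_apply : ∀ z : G, σbar (QuotientGroup.mk z) = QuotientGroup.mk (σ z) := by
    intro z
    exact hfmk z
  have hmem : σbar ∈ digraphAut (cayAdj T) := by
    intro q r
    obtain ⟨u, rfl⟩ := QuotientGroup.mk_surjective q
    obtain ⟨v, rfl⟩ := QuotientGroup.mk_surjective r
    rw [hσbar_apply, hσbar_apply, cayAdj_iff, cayAdj_iff]
    by_cases he : (QuotientGroup.mk u : G ⧸ N) = QuotientGroup.mk v
    · have he' := hA he
      rw [← he, ← he', mul_inv_cancel, mul_inv_cancel]
    · have he' : (QuotientGroup.mk (σ u) : G ⧸ N) ≠ QuotientGroup.mk (σ v) :=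
        fun h => he (hA' h)
      rw [← adj_cross N S₂ hT he', ← adj_cross N S₂ hT he]
      exact hσ u v
  have htrans := drr_translation hDRR₁ hmem
  intro z
  have h1 := htrans (QuotientGroup.mk z)
  rw [hσbar_apply] at h1
  have h2 : σbar 1 = QuotientGroup.mk (σ 1) := by
    have : (1 : G ⧸ N) = QuotientGroup.mk (1 : G) := rfl
    rw [this, hσbar_apply]
  rwa [h2] at h1

lemma stepC (hT : (1 : G ⧸ N) ∉ T) (hS₂ : (1 : ↥N) ∉ S₂)
    (hDRR₁ : IsDRR (G ⧸ N) (cayAdj T)) (hDRR₂ : IsDRR ↥N (cayAdj S₂))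
    (hcard : ¬(Nat.card (G ⧸ N) = 2 ∧ Nat.card ↥N = 2))
    {σ : Equiv.Perm G} (hσ : σ ∈ digraphAut (cayAdj (SS N T S₂))) :
    ∀ (x : G) (n : ↥N), σ ((↑n : G) * x) = ↑n * σ x := by
  classical
  intro x
  have hB := stepB hT hS₂ hDRR₁ hDRR₂ hcard hσ
  have hmkN : ∀ n : ↥N, (QuotientGroup.mk ((↑n : G) * x) : G ⧸ N) = QuotientGroup.mk x := by
    intro n
    rw [QuotientGroup.mk_mul, (QuotientGroup.eq_one_iff (↑n : G)).mpr n.2, one_mul]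
  have hmemN : ∀ n : ↥N, σ ((↑n : G) * x) * (σ x)⁻¹ ∈ N := by
    intro n
    rw [← QuotientGroup.eq_one_iff, mk_mul_inv, hB ((↑n : G) * x), hB x, hmkN n, mul_inv_cancel]
  set θ : ↥N → ↥N := fun n => ⟨σ ((↑n : G) * x) * (σ x)⁻¹, hmemN n⟩ with hθ
  have hinj : Function.Injective θ := by
    intro n m h
    have h1 : σ ((↑n : G) * x) * (σ x)⁻¹ = σ ((↑m : G) * x) * (σ x)⁻¹ :=
      congrArg Subtype.val h
    have h2 : σ ((↑n : G) * x) = σ ((↑m : G) * x) := mul_right_cancel h1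
    have h3 := σ.injective h2
    exact Subtype.val_injective (mul_right_cancel h3)
  have hbij := Finite.injective_iff_bijective.mp hinj
  set Θ : Equiv.Perm ↥N := Equiv.ofBijective θ hbij with hΘ
  have hmem : Θ ∈ digraphAut (cayAdj S₂) := by
    intro n m
    rw [cayAdj_iff, cayAdj_iff]
    have hval : (↑(Θ m * (Θ n)⁻¹) : G) = σ ((↑m : G) * x) * (σ ((↑n : G) * x))⁻¹ := by
      show (↑(θ m * (θ n)⁻¹) : G) = _
      rw [hθ]
      push_cast
      group
    rw [← memS₂_iff_val S₂, hval]
    have he1 : (QuotientGroup.mk (σ ((↑n : G) * x)) : G ⧸ N) =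
        QuotientGroup.mk (σ ((↑m : G) * x)) := by
      rw [hB ((↑n : G) * x), hB ((↑m : G) * x), hmkN n, hmkN m]
    rw [← adj_same N S₂ hT he1]
    rw [hσ]
    have he2 : (QuotientGroup.mk ((↑n : G) * x) : G ⧸ N) =
        QuotientGroup.mk ((↑m : G) * x) := by rw [hmkN, hmkN]
    rw [adj_same N S₂ hT he2]
    have hval2 : (↑m : G) * x * ((↑n : G) * x)⁻¹ = ↑(m * n⁻¹) := by
      push_cast
      group
    rw [hval2, memS₂_iff_val]
  have hfix : Θ 1 = 1 := by
    apply Subtype.val_injective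
    show σ ((↑(1 : ↥N) : G) * x) * (σ x)⁻¹ = ↑(1 : ↥N)
    push_cast
    rw [one_mul, mul_inv_cancel]
  have hone := drr_fix hDRR₂ hmem hfix
  intro n
  have : Θ n = n := by rw [hone]; rfl
  have hval : σ ((↑n : G) * x) * (σ x)⁻¹ = ↑n := congrArg Subtype.val this
  calc σ ((↑n : G) * x) = σ ((↑n : G) * x) * (σ x)⁻¹ * σ x := by group
    _ = ↑n * σ x := by rw [hval]

end StepBC

/-- If `Cay(G/N, S̄₁)` and `Cay(N, S₂)` are loopless DRRs and not both
`|G/N| = 2` and `|N| = 2`, then `Aut(Cay(G, S₁ ∪ S₂)) = W(G,N)`,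
where `S₁ = {g ∈ G : ḡ ∈ S̄₁}`. -/
theorem aut_cayley_eq_Wset {G : Type*} [Group G] [Fintype G]
    (N : Subgroup G) [N.Normal]
    (T : Set (G ⧸ N)) (hT : (1 : G ⧸ N) ∉ T)
    (S₂ : Set ↥N) (hS₂ : (1 : ↥N) ∉ S₂)
    (hDRR₁ : IsDRR (G ⧸ N) (cayAdj T)) (hDRR₂ : IsDRR ↥N (cayAdj S₂))
    (hcard : ¬ (Nat.card (G ⧸ N) = 2 ∧ Nat.card ↥N = 2)) :
    (↑(digraphAut (cayAdj ({g : G | QuotientGroup.mk g ∈ T} ∪ (Subtype.val '' S₂)))) :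
        Set (Equiv.Perm G)) = Wset G N := by
  have hSSeq : ({g : G | QuotientGroup.mk g ∈ T} ∪ (Subtype.val '' S₂)) = SS N T S₂ := rfl
  rw [hSSeq]
  ext σ
  rw [SetLike.mem_coe]
  constructor
  · -- Aut ⊆ W
    intro hσ
    refine ⟨σ 1, fun q => (σ 1)⁻¹ * ((q.out)⁻¹ * σ q.out), ?_, ?_⟩
    · intro q
      rw [← QuotientGroup.eq_one_iff]
      have hB := stepB hT hS₂ hDRR₁ hDRR₂ hcard hσ q.out
      rw [QuotientGroup.mk_mul, QuotientGroup.mk_mul, QuotientGroup.mk_inv,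
        QuotientGroup.mk_inv, hB]
      group
    · intro z
      set u : G := (QuotientGroup.mk z : G ⧸ N).out with hu
      have huz : (QuotientGroup.mk u : G ⧸ N) = QuotientGroup.mk z :=
        QuotientGroup.out_eq' _
      have hn : z * u⁻¹ ∈ N := by
        rw [← QuotientGroup.eq_one_iff, mk_mul_inv, huz, mul_inv_cancel]
      have h1 := stepC hT hS₂ hDRR₁ hDRR₂ hcard hσ u ⟨z * u⁻¹, hn⟩
      have hcoe : ((⟨z * u⁻¹, hn⟩ : ↥N) : G) = z * u⁻¹ := rfl
      rw [hcoe] at h1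
      have he : z * u⁻¹ * u = z := by group
      rw [he] at h1
      rw [h1, hu]
      group
  · -- W ⊆ Aut
    rintro ⟨c, f, hfN, hform⟩
    intro x y
    have hmkf : ∀ q, (QuotientGroup.mk (f q) : G ⧸ N) = 1 :=
      fun q => (QuotientGroup.eq_one_iff _).mpr (hfN q)
    have hmkσ : ∀ z : G, (QuotientGroup.mk (σ z) : G ⧸ N) =
        QuotientGroup.mk z * QuotientGroup.mk c := by
      intro z
      rw [hform z, QuotientGroup.mk_mul, QuotientGroup.mk_mul, hmkf, mul_one]
    have hmk_prod : (QuotientGroup.mk (σ y * (σ x)⁻¹) : G ⧸ N) =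
        QuotientGroup.mk (y * x⁻¹) := by
      rw [mk_mul_inv, mk_mul_inv, hmkσ, hmkσ]
      group
    rw [adj_iff, adj_iff]
    by_cases he : (QuotientGroup.mk x : G ⧸ N) = QuotientGroup.mk y
    · have hfe : f (QuotientGroup.mk x) = f (QuotientGroup.mk y) := by rw [he]
      have hprod : σ y * (σ x)⁻¹ = y * x⁻¹ := by
        rw [hform x, hform y, hfe]
        group
      rw [hprod]
    · constructor
      · rintro (h | h)
        · rw [hmk_prod] at h
          exact Or.inl h
        · have := memS₂_mk_eq N S₂ h
          rw [hmkσ, hmkσ] at this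
          exact absurd (mul_right_cancel this) he
      · rintro (h | h)
        · rw [hmk_prod]
          exact Or.inl h
        · exact absurd (memS₂_mk_eq N S₂ h) he
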